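/- Pgf of the sum on a χ-nary tree: let T be the χ-nary tree of radius ξ (rooted so that every non-leaf vertex has exactly χ children and every leaf is at distance ξ from the root), χ ≥ 1, ξ ≥ 1, let n = Σ_{i=0}^{ξ} χ^i be its number of vertices, let λ > 0, let α ∈ [0,1], and let N ~ MPMRF(λ, α, T) with α_e = α for every edge e. Define g_0(t) = t and g_{i+1}(t) = t(1 − α + α g_i(t))^χ. Then M = Σ_{v∈V} N_v has pgf E[t^M] = exp( λ(α + (1−α)n) · ( Σ_{i=0}^{ξ} [ χ^{ξ−i} (1−α)^{min(1, ξ−i)} / (α + (1−α)n) ] g_i(t) − 1 ) ) for t ∈ [−1,1]. -/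

import Mathlib

open MeasureTheory ProbabilityTheory
open scoped ProbabilityTheory

/-- The Poisson probability mass function with mean `lam`, evaluated at `k`. -/
noncomputable def poissonProb (lam : ℝ) (k : ℕ) : ℝ :=
  Real.exp (-lam) * lam ^ k / (Nat.factorial k)

/-- The MPMRF construction: a tree-structured Markov random field with Poisson(`lam`)
marginals, built on a tree `G` rooted at `root` via the stochastic representation
`N_root = L_root` and `N_v = α_{(pa v, v)} ∘ N_{pa v} + L_v` for `v ≠ root`, where `∘`
denotes binomial thinning (realized through the i.i.d. Bernoulli indicators `I v i`),
the innovations `L_v` are Poisson, and all innovations and indicator sequences are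
mutually independent. -/
structure MPMRF {V : Type} [Fintype V] [DecidableEq V]
    (G : SimpleGraph V) (lam : ℝ) (alpha : Sym2 V → ℝ)
    (Ω : Type) [MeasureSpace Ω] : Type where
  /-- the underlying graph is a tree -/
  isTree : G.IsTree
  lam_pos : 0 < lam
  alpha_mem : ∀ e ∈ G.edgeSet, alpha e ∈ Set.Icc (0 : ℝ) 1
  /-- the chosen root -/
  root : V
  /-- the parent function of the rooted tree -/
  pa : V → V
  pa_adj : ∀ v, v ≠ root → G.Adj (pa v) v
  pa_dist : ∀ v, v ≠ root → G.dist root (pa v) + 1 = G.dist root v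
  /-- innovation random variables -/
  L : V → Ω → ℕ
  /-- Bernoulli indicators used in the binomial thinnings -/
  I : V → ℕ → Ω → ℕ
  /-- the components of the Markov random field -/
  N : V → Ω → ℕ
  meas_L : ∀ v, Measurable (L v)
  meas_I : ∀ v i, Measurable (I v i)
  meas_N : ∀ v, Measurable (N v)
  I_le_one : ∀ v i ω, I v i ω ≤ 1
  I_bern : ∀ v, v ≠ root → ∀ i,
    ℙ {ω | I v i ω = 1} = ENNReal.ofReal (alpha s(pa v, v))
  L_root_poisson : ∀ k, ℙ {ω | L root ω = k} = ENNReal.ofReal (poissonProb lam k)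
  L_poisson : ∀ v, v ≠ root → ∀ k,
    ℙ {ω | L v ω = k} =
      ENNReal.ofReal (poissonProb (lam * (1 - alpha s(pa v, v))) k)
  /-- the innovations and all indicator variables are mutually independent -/
  indep : iIndepFun
    (Sum.elim L (fun p : V × ℕ => I p.1 p.2)) ℙ
  N_root : N root = L root
  N_rec : ∀ v, v ≠ root → ∀ ω,
    N v ω = (∑ i ∈ Finset.range (N (pa v) ω), I v i ω) + L v ω

/-- `gwSum a χ i` is the pgf of the sum of generations `0` through `i` of a
Galton–Watson process with Binomial(`χ`, `a`) offspring distribution: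
`g_0(t) = t` and `g_{i+1}(t) = t (1 − a + a g_i(t))^χ`. -/
noncomputable def gwSum (a : ℝ) (χ : ℕ) : ℕ → ℝ → ℝ
  | 0, t => t
  | (i + 1), t => t * (1 - a + a * gwSum a χ i t) ^ χ


section Aux

open MeasurableSpace

lemma gwSum_abs_le {a : ℝ} {χ : ℕ} (ha0 : 0 ≤ a) (ha1 : a ≤ 1) {t : ℝ} (ht : |t| ≤ 1) :
    ∀ i, |gwSum a χ i t| ≤ 1 := by
  intro i
  induction i with
  | zero => exact ht
  | succ i ih =>
    have h1 : |1 - a + a * gwSum a χ i t| ≤ 1 := by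
      calc |1 - a + a * gwSum a χ i t| ≤ |1 - a| + |a * gwSum a χ i t| := abs_add_le _ _
        _ = (1 - a) + a * |gwSum a χ i t| := by
            rw [abs_mul, abs_of_nonneg ha0, abs_of_nonneg (by linarith)]
        _ ≤ (1 - a) + a * 1 := by nlinarith
        _ = 1 := by ring
    calc |gwSum a χ (i+1) t| = |t| * |1 - a + a * gwSum a χ i t| ^ χ := by
          rw [gwSum, abs_mul, abs_pow]
      _ ≤ 1 * 1 ^ χ := by
          apply mul_le_mul ht (pow_le_pow_left₀ (abs_nonneg _) h1 χ) (by positivity) one_pos.le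
      _ = 1 := by simp

variable {Ω : Type} [MeasureSpace Ω] [MeasureTheory.IsProbabilityMeasure (ℙ : Measure Ω)]

/-- a bounded measurable function is integrable on a probability space -/
lemma integrable_of_bounded {f : Ω → ℝ} (hf : Measurable f) (C : ℝ) (hC : ∀ ω, |f ω| ≤ C) :
    MeasureTheory.Integrable f ℙ := by
  exact (MeasureTheory.integrable_const C).mono' hf.aestronglyMeasurable
    (Filter.Eventually.of_forall hC)

/-- measurability (w.r.t. a sub-σ-algebra) of a random finite sum -/
lemma measurable_sum_range {m : MeasurableSpace Ω} {g : Ω → ℕ} {h : ℕ → Ω → ℕ}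
    (hg : Measurable[m] g) (hh : ∀ i, Measurable[m] (h i)) :
    Measurable[m] (fun ω => ∑ i ∈ Finset.range (g ω), h i ω) := by
  apply measurable_to_countable'
  intro n
  have : (fun ω => ∑ i ∈ Finset.range (g ω), h i ω) ⁻¹' {n}
      = ⋃ k, ({ω | g ω = k} ∩ {ω | ∑ i ∈ Finset.range k, h i ω = n}) := by
    ext ω
    simp only [Set.mem_preimage, Set.mem_singleton_iff, Set.mem_iUnion, Set.mem_inter_iff,
      Set.mem_setOf_eq]
    constructor
    · intro hn; exact ⟨g ω, rfl, hn⟩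
    · rintro ⟨k, hk, hn⟩; rw [← hn]; congr 1; rw [hk]
  rw [this]
  exact MeasurableSet.iUnion fun k =>
    ((hg (measurableSet_singleton k)).inter
      ((Finset.measurable_sum _ (fun i _ => hh i)) (measurableSet_singleton n)))

/-- expectation via a countable partition given by the fibers of a function -/
lemma integral_eq_tsum_fibers {κ : Type*} [Countable κ] {Y : Ω → κ}
    (hY : ∀ k, MeasurableSet {ω | Y ω = k}) {f : Ω → ℝ}
    (hf : MeasureTheory.Integrable f ℙ) :
    ∫ ω, f ω = ∑' k : κ, ∫ ω in {ω | Y ω = k}, f ω := by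
  have hcov : (⋃ k, {ω | Y ω = k}) = Set.univ := by
    ext ω; simp only [Set.mem_iUnion, Set.mem_setOf_eq, Set.mem_univ, iff_true]
    exact ⟨Y ω, rfl⟩
  have hd : Pairwise (Function.onFun Disjoint (fun k => {ω | Y ω = k})) := by
    intro i j hij
    simp only [Function.onFun, Set.disjoint_left, Set.mem_setOf_eq]
    intro ω hi hj; exact hij (hi ▸ hj ▸ rfl)
  calc ∫ ω, f ω = ∫ ω in Set.univ, f ω := by rw [MeasureTheory.setIntegral_univ]
    _ = ∫ ω in ⋃ k, {ω | Y ω = k}, f ω := by rw [hcov]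
    _ = ∑' k, ∫ ω in {ω | Y ω = k}, f ω :=
        MeasureTheory.integral_iUnion hY hd (hcov ▸ hf.integrableOn)

end Aux

section PGF

open MeasureTheory

variable {Ω : Type} [MeasureSpace Ω] [IsProbabilityMeasure (ℙ : Measure Ω)]

lemma pow_nat_abs_le_one {s : ℝ} (hs : |s| ≤ 1) (n : ℕ) : |s ^ n| ≤ 1 := by
  rw [abs_pow]
  exact pow_le_one₀ (abs_nonneg s) hs

lemma pgf_of_bernoulli {X : Ω → ℕ} (hX : Measurable X) (hle : ∀ ω, X ω ≤ 1) {p : ℝ}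
    (hp0 : 0 ≤ p) (hdist : ℙ {ω | X ω = 1} = ENNReal.ofReal p) (s : ℝ) :
    ∫ ω, s ^ X ω = 1 - p + p * s := by
  have hA : MeasurableSet {ω | X ω = 1} := hX (measurableSet_singleton 1)
  have hfe : (fun ω => s ^ X ω)
      = fun ω => Set.indicator {ω | X ω = 1} (fun _ => s - 1) ω + 1 := by
    funext ω
    by_cases h : X ω = 1
    · simp [Set.indicator_of_mem, h]
    · have h0 : X ω = 0 := Nat.le_zero.mp (Nat.lt_succ_iff.mp (lt_of_le_of_ne (hle ω) h))
      simp [Set.indicator_of_notMem, h, h0]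
  rw [hfe, integral_add ?hint (integrable_const 1)]
  case hint =>
    exact (integrable_const (s - 1)).indicator hA
  rw [integral_indicator_const _ hA, integral_const, measureReal_def, hdist, ENNReal.toReal_ofReal hp0, measureReal_def]
  simp only [measure_univ, ENNReal.toReal_one, smul_eq_mul, one_mul]
  ring

lemma pgf_of_poisson {X : Ω → ℕ} (hX : Measurable X) {μ : ℝ} (hμ : 0 ≤ μ)
    (hdist : ∀ k, ℙ {ω | X ω = k} = ENNReal.ofReal (poissonProb μ k)) {s : ℝ} (hs : |s| ≤ 1) :
    ∫ ω, s ^ X ω = Real.exp (μ * (s - 1)) := by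
  have hmeas : Measurable fun ω => s ^ X ω := by
    exact Measurable.comp (measurable_from_top (f := fun n : ℕ => s ^ n)) hX
  have hint : Integrable (fun ω => s ^ X ω) ℙ :=
    integrable_of_bounded hmeas 1 (fun ω => pow_nat_abs_le_one hs (X ω))
  have hpp : ∀ k, (0:ℝ) ≤ poissonProb μ k := by
    intro k
    unfold poissonProb
    positivity
  rw [integral_eq_tsum_fibers (Y := X) (fun k => hX (measurableSet_singleton k)) hint]
  have hterm : ∀ k, ∫ ω in {ω | X ω = k}, s ^ X ω = Real.exp (-μ) * ((μ * s) ^ k / k.factorial) := by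
    intro k
    have : ∫ ω in {ω | X ω = k}, s ^ X ω = ∫ _ω in {ω | X ω = k}, s ^ k := by
      apply setIntegral_congr_fun (hX (measurableSet_singleton k))
      intro ω hω
      have : X ω = k := hω
      simp only [this]
    rw [this, setIntegral_const, measureReal_def, hdist k, ENNReal.toReal_ofReal (hpp k)]
    unfold poissonProb
    rw [smul_eq_mul, mul_pow]
    ring
  rw [tsum_congr hterm, tsum_mul_left]
  have hexp : ∑' k : ℕ, (μ * s) ^ k / (k.factorial : ℝ) = Real.exp (μ * s) := by
    rw [Real.exp_eq_exp_ℝ, NormedSpace.exp_eq_tsum_div]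
  rw [hexp, ← Real.exp_add]
  ring_nf

end PGF

namespace MPMRF

open MeasureTheory ProbabilityTheory MeasurableSpace

variable {V : Type} [Fintype V] [DecidableEq V]
    {G : SimpleGraph V} {lam a : ℝ} {alpha : Sym2 V → ℝ}
    {Ω : Type} [MeasureSpace Ω] [IsProbabilityMeasure (ℙ : Measure Ω)]

/-- all innovations and indicators bundled as one family -/
def F (M : MPMRF G lam alpha Ω) : V ⊕ V × ℕ → Ω → ℕ :=
  Sum.elim M.L fun p => M.I p.1 p.2

lemma meas_F (M : MPMRF G lam alpha Ω) (x : V ⊕ V × ℕ) : Measurable (M.F x) := by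
  cases x with
  | inl v => exact M.meas_L v
  | inr p => exact M.meas_I p.1 p.2

/-- σ-algebra generated by a sub-family of the innovations/indicators -/
def mS (M : MPMRF G lam alpha Ω) (S : Set (V ⊕ V × ℕ)) : MeasurableSpace Ω :=
  ⨆ x ∈ S, MeasurableSpace.comap (M.F x) inferInstance

lemma mS_le (M : MPMRF G lam alpha Ω) (S : Set (V ⊕ V × ℕ)) :
    M.mS S ≤ (inferInstance : MeasurableSpace Ω) :=
  iSup₂_le fun x _ => (M.meas_F x).comap_le

lemma mS_mono (M : MPMRF G lam alpha Ω) {S T : Set (V ⊕ V × ℕ)} (h : S ⊆ T) :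
    M.mS S ≤ M.mS T :=
  iSup₂_le fun x hx => le_iSup₂ (f := fun x (_ : x ∈ T) => MeasurableSpace.comap (M.F x) inferInstance) x (h hx)

lemma measurable_F_mS (M : MPMRF G lam alpha Ω) {S : Set (V ⊕ V × ℕ)} {x : V ⊕ V × ℕ}
    (hx : x ∈ S) : Measurable[M.mS S] (M.F x) :=
  (measurable_iff_comap_le).mpr
    (le_iSup₂ (f := fun x (_ : x ∈ S) => MeasurableSpace.comap (M.F x) inferInstance) x hx)

lemma measurable_L_mS (M : MPMRF G lam alpha Ω) {S : Set (V ⊕ V × ℕ)} {v : V}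
    (hv : Sum.inl v ∈ S) : Measurable[M.mS S] (M.L v) :=
  M.measurable_F_mS hv

lemma measurable_I_mS (M : MPMRF G lam alpha Ω) {S : Set (V ⊕ V × ℕ)} {v : V} {i : ℕ}
    (hv : Sum.inr (v, i) ∈ S) : Measurable[M.mS S] (M.I v i) :=
  M.measurable_F_mS hv

lemma indep_mS (M : MPMRF G lam alpha Ω) {S T : Set (V ⊕ V × ℕ)} (h : Disjoint S T) :
    Indep (M.mS S) (M.mS T) ℙ :=
  indep_iSup_of_disjoint (fun x => (M.meas_F x).comap_le) M.indep.iIndep h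

lemma indepFun_of_mS (M : MPMRF G lam alpha Ω) {S T : Set (V ⊕ V × ℕ)} (h : Disjoint S T)
    {β γ : Type*} [MeasurableSpace β] [MeasurableSpace γ] {f : Ω → β} {g : Ω → γ}
    (hf : Measurable[M.mS S] f) (hg : Measurable[M.mS T] g) : IndepFun f g ℙ :=
  indep_of_indep_of_le_right (indep_of_indep_of_le_left (M.indep_mS h) hf.comap_le) hg.comap_le

/-- depth of a vertex -/
noncomputable def dep (M : MPMRF G lam alpha Ω) (v : V) : ℕ := G.dist M.root v

lemma dep_eq_zero_iff (M : MPMRF G lam alpha Ω) {v : V} : M.dep v = 0 ↔ v = M.root := by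
  rw [dep, M.isTree.isConnected.dist_eq_zero_iff, eq_comm]

lemma dep_pa (M : MPMRF G lam alpha Ω) {v : V} (hv : v ≠ M.root) :
    M.dep (M.pa v) + 1 = M.dep v := M.pa_dist v hv

end MPMRF

namespace MPMRF

open MeasureTheory ProbabilityTheory MeasurableSpace

variable {V : Type} [Fintype V] [DecidableEq V]
    {G : SimpleGraph V} {lam a : ℝ} {alpha : Sym2 V → ℝ}
    {Ω : Type} [MeasureSpace Ω] [IsProbabilityMeasure (ℙ : Measure Ω)]

/-- indices of innovations and indicators attached to vertices of depth `≤ j` -/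
def blw (M : MPMRF G lam alpha Ω) (j : ℕ) : Set (V ⊕ V × ℕ) :=
  {x | M.dep (Sum.elim id Prod.fst x) ≤ j}

/-- indices of the innovation and indicators attached to vertex `c` -/
def grp (M : MPMRF G lam alpha Ω) (c : V) : Set (V ⊕ V × ℕ) :=
  {x | Sum.elim id Prod.fst x = c}

lemma disjoint_blw_grp (M : MPMRF G lam alpha Ω) {j : ℕ} {c : V} (h : j < M.dep c) :
    Disjoint (M.blw j) (M.grp c) := by
  rw [Set.disjoint_left]
  intro x hx hc
  rw [blw, Set.mem_setOf_eq] at hx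
  rw [grp, Set.mem_setOf_eq] at hc
  rw [hc] at hx
  omega

lemma disjoint_grp_grp (M : MPMRF G lam alpha Ω) {c c' : V} (h : c ≠ c') :
    Disjoint (M.grp c) (M.grp c') := by
  rw [Set.disjoint_left]
  intro x hx hc
  rw [grp, Set.mem_setOf_eq] at hx hc
  exact h (hx ▸ hc ▸ rfl)

lemma measurable_N_mS (M : MPMRF G lam alpha Ω) {j : ℕ} :
    ∀ {v : V}, M.dep v ≤ j → Measurable[M.mS (M.blw j)] (M.N v) := by
  suffices H : ∀ n : ℕ, ∀ v : V, M.dep v = n → M.dep v ≤ j →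
      Measurable[M.mS (M.blw j)] (M.N v) by
    intro v hv; exact H _ v rfl hv
  intro n
  induction n using Nat.strong_induction_on with
  | _ n ih =>
    intro v hn hj
    by_cases hr : v = M.root
    · subst hr
      rw [M.N_root]
      refine M.measurable_L_mS ?_
      simp only [blw, Set.mem_setOf_eq, Sum.elim_inl, id_eq]
      rw [M.dep_eq_zero_iff.mpr rfl]
      omega
    · have hrec : M.N v = fun ω => (∑ i ∈ Finset.range (M.N (M.pa v) ω), M.I v i ω) + M.L v ω :=
        funext (M.N_rec v hr)
      have hpa : M.dep (M.pa v) + 1 = M.dep v := M.dep_pa hr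
      have hmempa : M.dep (M.pa v) < n := by omega
      rw [hrec]
      apply Measurable.add
      · exact measurable_sum_range (ih _ hmempa (M.pa v) rfl (by omega))
          (fun i => M.measurable_I_mS (by simp only [blw, Set.mem_setOf_eq, Sum.elim_inr]; omega))
      · exact M.measurable_L_mS (by simp only [blw, Set.mem_setOf_eq, Sum.elim_inl, id_eq]; omega)

/-- the set of vertices at depth `d` -/
noncomputable def Lvl (M : MPMRF G lam alpha Ω) (d : ℕ) : Finset V :=
  Finset.univ.filter (fun v => M.dep v = d)

lemma Lvl_zero (M : MPMRF G lam alpha Ω) : M.Lvl 0 = {M.root} := by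
  ext v
  simp only [Lvl, Finset.mem_filter, Finset.mem_univ, true_and, Finset.mem_singleton]
  exact M.dep_eq_zero_iff

lemma children_eq (M : MPMRF G lam alpha Ω) {m : ℕ} {v : V} (hv : M.dep v = m) :
    (M.Lvl (m + 1)).filter (fun c => M.pa c = v)
      = Finset.univ.filter (fun j => j ≠ M.root ∧ M.pa j = v) := by
  ext c
  simp only [Lvl, Finset.mem_filter, Finset.mem_univ, true_and]
  constructor
  · rintro ⟨hd, hp⟩
    refine ⟨fun hc => ?_, hp⟩
    rw [hc] at hd
    rw [M.dep_eq_zero_iff.mpr rfl] at hd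
    omega
  · rintro ⟨hc, hp⟩
    refine ⟨?_, hp⟩
    have := M.dep_pa hc
    rw [hp, hv] at this
    omega

lemma mem_Lvl_succ (M : MPMRF G lam alpha Ω) {m : ℕ} {c : V} (hc : c ∈ M.Lvl (m + 1)) :
    c ≠ M.root ∧ M.pa c ∈ M.Lvl m := by
  simp only [Lvl, Finset.mem_filter, Finset.mem_univ, true_and] at hc ⊢
  have hcr : c ≠ M.root := by
    intro h; rw [h, M.dep_eq_zero_iff.mpr rfl] at hc; omega
  have := M.dep_pa hcr
  exact ⟨hcr, by omega⟩

lemma card_Lvl (M : MPMRF G lam alpha Ω) {χ ξ : ℕ}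
    (hchildren : ∀ v : V, G.dist M.root v < ξ →
      (Finset.univ.filter (fun j => j ≠ M.root ∧ M.pa j = v)).card = χ) :
    ∀ m, m ≤ ξ → (M.Lvl m).card = χ ^ m := by
  intro m
  induction m with
  | zero => intro _; rw [Lvl_zero]; simp
  | succ m ih =>
    intro hm
    have hstep : (M.Lvl (m + 1)).card
        = ∑ v ∈ M.Lvl m, ((M.Lvl (m + 1)).filter (fun c => M.pa c = v)).card :=
      Finset.card_eq_sum_card_fiberwise (fun c hc => (M.mem_Lvl_succ hc).2)
    rw [hstep]
    have hv : ∀ v ∈ M.Lvl m, ((M.Lvl (m + 1)).filter (fun c => M.pa c = v)).card = χ := by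
      intro v hv
      simp only [Lvl, Finset.mem_filter, Finset.mem_univ, true_and] at hv
      rw [M.children_eq hv]
      have hv' : G.dist M.root v = m := hv
      exact hchildren v (by omega)
    rw [Finset.sum_congr rfl hv, Finset.sum_const, ih (by omega), smul_eq_mul, pow_succ]
end MPMRF

namespace MPMRF

open MeasureTheory ProbabilityTheory MeasurableSpace

variable {V : Type} [Fintype V] [DecidableEq V]
    {G : SimpleGraph V} {lam a : ℝ} {alpha : Sym2 V → ℝ}
    {Ω : Type} [MeasureSpace Ω] [IsProbabilityMeasure (ℙ : Measure Ω)]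

lemma measurable_pow_comp {m : MeasurableSpace Ω} {X : Ω → ℕ} (hX : Measurable[m] X) (s : ℝ) :
    Measurable[m] (fun ω => s ^ X ω) :=
  (measurable_from_top (f := fun n : ℕ => s ^ n)).comp hX

lemma alpha_pa (M : MPMRF G lam alpha Ω) (halpha : ∀ e ∈ G.edgeSet, alpha e = a)
    {c : V} (hc : c ≠ M.root) : alpha s(M.pa c, c) = a :=
  halpha _ (G.mem_edgeSet.mpr (M.pa_adj c hc))

lemma pgf_I (M : MPMRF G lam alpha Ω) (ha : a ∈ Set.Icc (0:ℝ) 1)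
    (halpha : ∀ e ∈ G.edgeSet, alpha e = a) {c : V} (hc : c ≠ M.root) (i : ℕ) (s : ℝ) :
    ∫ ω, s ^ M.I c i ω = 1 - a + a * s :=
  pgf_of_bernoulli (M.meas_I c i) (M.I_le_one c i) ha.1
    (by rw [M.I_bern c hc i, M.alpha_pa halpha hc]) s

lemma pgf_L (M : MPMRF G lam alpha Ω) (ha : a ∈ Set.Icc (0:ℝ) 1)
    (halpha : ∀ e ∈ G.edgeSet, alpha e = a) {c : V} (hc : c ≠ M.root) {s : ℝ} (hs : |s| ≤ 1) :
    ∫ ω, s ^ M.L c ω = Real.exp (lam * (1 - a) * (s - 1)) := by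
  apply pgf_of_poisson (M.meas_L c) (by nlinarith [M.lam_pos, ha.2] : (0:ℝ) ≤ lam * (1 - a))
    _ hs
  intro k
  rw [M.L_poisson c hc k, M.alpha_pa halpha hc]

lemma pgf_prod_I (M : MPMRF G lam alpha Ω) (ha : a ∈ Set.Icc (0:ℝ) 1)
    (halpha : ∀ e ∈ G.edgeSet, alpha e = a) {c : V} (hc : c ≠ M.root) {s : ℝ} (hs : |s| ≤ 1)
    (k : ℕ) :
    ∫ ω, ∏ i ∈ Finset.range k, s ^ M.I c i ω = (1 - a + a * s) ^ k := by
  induction k with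
  | zero => simp
  | succ k ih =>
    have hmf : Measurable[M.mS {x | ∃ i < k, x = Sum.inr (c, i)}]
        (fun ω => ∏ i ∈ Finset.range k, s ^ M.I c i ω) := by
      apply Finset.measurable_prod
      intro i hi
      exact measurable_pow_comp
        (M.measurable_I_mS (by exact ⟨i, Finset.mem_range.mp hi, rfl⟩)) s
    have hmg : Measurable[M.mS {Sum.inr (c, k)}] (fun ω => s ^ M.I c k ω) :=
      measurable_pow_comp (M.measurable_I_mS (Set.mem_singleton _)) s
    have hdisj : Disjoint {x : V ⊕ V × ℕ | ∃ i < k, x = Sum.inr (c, i)} {Sum.inr (c, k)} := by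
      rw [Set.disjoint_left]
      rintro x ⟨i, hik, rfl⟩ hx
      simp only [Set.mem_singleton_iff, Sum.inr.injEq, Prod.mk.injEq] at hx
      omega
    have hindep : IndepFun (fun ω => ∏ i ∈ Finset.range k, s ^ M.I c i ω)
        (fun ω => s ^ M.I c k ω) ℙ := M.indepFun_of_mS hdisj hmf hmg
    have habs : ∀ ω, |∏ i ∈ Finset.range k, s ^ M.I c i ω| ≤ 1 := by
      intro ω
      rw [Finset.abs_prod]
      apply Finset.prod_le_one (fun i _ => abs_nonneg _)
      intro i _
      exact pow_nat_abs_le_one hs _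
    have hint1 : Integrable (fun ω => ∏ i ∈ Finset.range k, s ^ M.I c i ω) ℙ :=
      integrable_of_bounded (hmf.mono (M.mS_le _) le_rfl) 1 habs
    have hint2 : Integrable (fun ω => s ^ M.I c k ω) ℙ :=
      integrable_of_bounded (hmg.mono (M.mS_le _) le_rfl) 1
        (fun ω => pow_nat_abs_le_one hs _)
    calc ∫ ω, ∏ i ∈ Finset.range (k+1), s ^ M.I c i ω
        = ∫ ω, (∏ i ∈ Finset.range k, s ^ M.I c i ω) * s ^ M.I c k ω := by
          congr 1; funext ω; rw [Finset.prod_range_succ]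
      _ = (∫ ω, ∏ i ∈ Finset.range k, s ^ M.I c i ω) * ∫ ω, s ^ M.I c k ω :=
          hindep.integral_fun_mul_eq_mul_integral hint1.1 hint2.1
      _ = (1 - a + a * s) ^ k * (1 - a + a * s) := by rw [ih, M.pgf_I ha halpha hc k s]
      _ = (1 - a + a * s) ^ (k + 1) := by rw [pow_succ]

lemma pgf_group (M : MPMRF G lam alpha Ω) (ha : a ∈ Set.Icc (0:ℝ) 1)
    (halpha : ∀ e ∈ G.edgeSet, alpha e = a) {c : V} (hc : c ≠ M.root) (k : ℕ) {s : ℝ}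
    (hs : |s| ≤ 1) :
    ∫ ω, s ^ ((∑ i ∈ Finset.range k, M.I c i ω) + M.L c ω)
      = (1 - a + a * s) ^ k * Real.exp (lam * (1 - a) * (s - 1)) := by
  have hpt : ∀ ω, s ^ ((∑ i ∈ Finset.range k, M.I c i ω) + M.L c ω)
      = (∏ i ∈ Finset.range k, s ^ M.I c i ω) * s ^ M.L c ω := by
    intro ω
    rw [pow_add, Finset.prod_pow_eq_pow_sum]
  have hmf : Measurable[M.mS {x | ∃ i < k, x = Sum.inr (c, i)}]
      (fun ω => ∏ i ∈ Finset.range k, s ^ M.I c i ω) := by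
    apply Finset.measurable_prod
    intro i hi
    exact measurable_pow_comp
      (M.measurable_I_mS (by exact ⟨i, Finset.mem_range.mp hi, rfl⟩)) s
  have hmg : Measurable[M.mS {Sum.inl c}] (fun ω => s ^ M.L c ω) :=
    measurable_pow_comp (M.measurable_L_mS (Set.mem_singleton _)) s
  have hdisj : Disjoint {x : V ⊕ V × ℕ | ∃ i < k, x = Sum.inr (c, i)}
      ({Sum.inl c} : Set (V ⊕ V × ℕ)) := by
    rw [Set.disjoint_left]
    rintro x ⟨i, hik, rfl⟩ hx
    simp at hx
  have hindep : IndepFun (fun ω => ∏ i ∈ Finset.range k, s ^ M.I c i ω)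
      (fun ω => s ^ M.L c ω) ℙ := M.indepFun_of_mS hdisj hmf hmg
  have habs : ∀ ω, |∏ i ∈ Finset.range k, s ^ M.I c i ω| ≤ 1 := by
    intro ω
    rw [Finset.abs_prod]
    apply Finset.prod_le_one (fun i _ => abs_nonneg _)
    intro i _
    exact pow_nat_abs_le_one hs _
  have hint1 : Integrable (fun ω => ∏ i ∈ Finset.range k, s ^ M.I c i ω) ℙ :=
    integrable_of_bounded (hmf.mono (M.mS_le _) le_rfl) 1 habs
  have hint2 : Integrable (fun ω => s ^ M.L c ω) ℙ :=
    integrable_of_bounded (hmg.mono (M.mS_le _) le_rfl) 1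
      (fun ω => pow_nat_abs_le_one hs _)
  calc ∫ ω, s ^ ((∑ i ∈ Finset.range k, M.I c i ω) + M.L c ω)
      = ∫ ω, (∏ i ∈ Finset.range k, s ^ M.I c i ω) * s ^ M.L c ω := by
        congr 1; funext ω; rw [hpt]
    _ = (∫ ω, ∏ i ∈ Finset.range k, s ^ M.I c i ω) * ∫ ω, s ^ M.L c ω :=
        hindep.integral_fun_mul_eq_mul_integral hint1.1 hint2.1
    _ = (1 - a + a * s) ^ k * Real.exp (lam * (1 - a) * (s - 1)) := by
        rw [M.pgf_prod_I ha halpha hc hs k, M.pgf_L ha halpha hc hs]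

end MPMRF

namespace MPMRF

open MeasureTheory ProbabilityTheory MeasurableSpace

variable {V : Type} [Fintype V] [DecidableEq V]
    {G : SimpleGraph V} {lam a : ℝ} {alpha : Sym2 V → ℝ}
    {Ω : Type} [MeasureSpace Ω] [IsProbabilityMeasure (ℙ : Measure Ω)]

lemma measurable_Y (M : MPMRF G lam alpha Ω) (c : V) (m : ℕ) :
    Measurable[M.mS (M.grp c)] (fun ω => (∑ i ∈ Finset.range m, M.I c i ω) + M.L c ω) := by
  apply Measurable.add
  · exact Finset.measurable_sum _ (fun i _ => M.measurable_I_mS (by rfl))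
  · exact M.measurable_L_mS (by rfl)

theorem peel (M : MPMRF G lam alpha Ω) (ha : a ∈ Set.Icc (0:ℝ) 1)
    (halpha : ∀ e ∈ G.edgeSet, alpha e = a) {χ ξ : ℕ}
    (hchildren : ∀ v : V, G.dist M.root v < ξ →
      (Finset.univ.filter (fun j => j ≠ M.root ∧ M.pa j = v)).card = χ)
    {j : ℕ} (hj : j + 1 ≤ ξ)
    (s s' : ℕ → ℝ) (hs : ∀ d, |s d| ≤ 1) (hs'le : ∀ d, |s' d| ≤ 1)
    (hs' : ∀ d, d < j → s' d = s d)
    (hs'j : s' j = s j * (1 - a + a * s (j+1)) ^ χ) :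
    ∫ ω, ∏ v ∈ Finset.univ.filter (fun v => M.dep v ≤ j+1), s (M.dep v) ^ M.N v ω
      = Real.exp ((χ:ℝ)^(j+1) * (lam * (1-a) * (s (j+1) - 1)))
        * ∫ ω, ∏ v ∈ Finset.univ.filter (fun v => M.dep v ≤ j), s' (M.dep v) ^ M.N v ω := by
  classical
  set β : ℝ := lam * (1-a) * (s (j+1) - 1) with hβ
  set Jset : Finset V := Finset.univ.filter (fun v => M.dep v ≤ j) with hJset
  -- the level j+1
  have hLv_ne_root : ∀ c ∈ M.Lvl (j+1), c ≠ M.root := fun c hc => (M.mem_Lvl_succ hc).1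
  have hLv_dep : ∀ c ∈ M.Lvl (j+1), M.dep c = j + 1 := by
    intro c hc
    simpa only [Lvl, Finset.mem_filter, Finset.mem_univ, true_and] using hc
  have hLv_pa : ∀ c ∈ M.Lvl (j+1), M.pa c ∈ Jset := by
    intro c hc
    have h2 := (M.mem_Lvl_succ hc).2
    simp only [Lvl, Finset.mem_filter, Finset.mem_univ, true_and] at h2
    simp only [hJset, Finset.mem_filter, Finset.mem_univ, true_and]
    omega
  -- split of the product
  have hsplit : Finset.univ.filter (fun v => M.dep v ≤ j+1) = Jset ∪ M.Lvl (j+1) := by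
    ext v
    simp only [hJset, Lvl, Finset.mem_filter, Finset.mem_univ, true_and, Finset.mem_union]
    omega
  have hdisjJL : Disjoint Jset (M.Lvl (j+1)) := by
    rw [Finset.disjoint_left]
    intro v hv hv'
    simp only [hJset, Finset.mem_filter, Finset.mem_univ, true_and] at hv
    simp only [Lvl, Finset.mem_filter, Finset.mem_univ, true_and] at hv'
    omega
  -- the partition function
  set Ykey : Ω → (V → ℕ) := fun ω v => if M.dep v ≤ j then M.N v ω else 0 with hYkey
  have hAk : ∀ k : V → ℕ, MeasurableSet[M.mS (M.blw j)] {ω | Ykey ω = k} := by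
    intro k
    have : {ω | Ykey ω = k} = ⋂ v : V, {ω | Ykey ω v = k v} := by
      ext ω
      simp only [Set.mem_setOf_eq, Set.mem_iInter, funext_iff]
    rw [this]
    apply MeasurableSet.iInter
    intro v
    by_cases hv : M.dep v ≤ j
    · have : {ω | Ykey ω v = k v} = (M.N v) ⁻¹' {k v} := by
        ext ω; simp only [hYkey, Set.mem_setOf_eq, if_pos hv, Set.mem_preimage,
          Set.mem_singleton_iff]
      rw [this]
      exact M.measurable_N_mS hv (measurableSet_singleton _)
    · have : {ω | Ykey ω v = k v} = {ω | 0 = k v} := by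
        ext ω; simp only [hYkey, Set.mem_setOf_eq, if_neg hv]
      rw [this]
      by_cases h0 : 0 = k v
      · simp only [h0, Set.setOf_true]; exact @MeasurableSet.univ Ω (M.mS (M.blw j))
      · simp only [h0, Set.setOf_false]; exact @MeasurableSet.empty Ω (M.mS (M.blw j))
  have hAkamb : ∀ k : V → ℕ, MeasurableSet {ω | Ykey ω = k} :=
    fun k => M.mS_le (M.blw j) _ (hAk k)
  -- abbreviations
  set u : ℝ := 1 - a + a * s (j+1) with hu
  have hsj1 : |s (j+1)| ≤ 1 := hs (j+1)
  have hu_abs : |u| ≤ 1 := by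
    rw [hu]
    calc |1 - a + a * s (j+1)| ≤ |1-a| + |a * s (j+1)| := abs_add_le _ _
      _ = (1-a) + a * |s (j+1)| := by
          rw [abs_mul, abs_of_nonneg ha.1, abs_of_nonneg (by linarith [ha.2])]
      _ ≤ (1-a) + a * 1 := by nlinarith [ha.1]
      _ = 1 := by ring
  -- integrands
  set f : Ω → ℝ := fun ω => ∏ v ∈ Finset.univ.filter (fun v => M.dep v ≤ j+1),
    s (M.dep v) ^ M.N v ω with hf
  set f' : Ω → ℝ := fun ω => ∏ v ∈ Jset, s' (M.dep v) ^ M.N v ω with hf'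
  have hfmeas : Measurable f :=
    Finset.measurable_prod _ (fun v _ => measurable_pow_comp (M.meas_N v) _)
  have hf'meas : Measurable f' :=
    Finset.measurable_prod _ (fun v _ => measurable_pow_comp (M.meas_N v) _)
  have habs_prod : ∀ (W : Finset V) (g : ℕ → ℝ), (∀ d, |g d| ≤ 1) → ∀ ω : Ω,
      |∏ v ∈ W, g (M.dep v) ^ M.N v ω| ≤ 1 := by
    intro W g hg ω
    rw [Finset.abs_prod]
    exact Finset.prod_le_one (fun v _ => abs_nonneg _)
      (fun v _ => pow_nat_abs_le_one (hg _) _)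
  have hfint : Integrable f ℙ := integrable_of_bounded hfmeas 1 (habs_prod _ s hs)
  have hf'int : Integrable f' ℙ := integrable_of_bounded hf'meas 1 (habs_prod _ s' hs'le)
  -- the per-fiber factorization
  have key : ∀ k : V → ℕ,
      ∫ ω in {ω | Ykey ω = k}, f ω
        = ((ℙ {ω | Ykey ω = k}).toReal * ∏ v ∈ Jset, s (M.dep v) ^ k v)
            * ∏ c ∈ M.Lvl (j+1), (u ^ (k (M.pa c)) * Real.exp β) := by
    intro k
    -- the substituted integrand on the fiber
    set Yc : V → Ω → ℕ := fun c ω => (∑ i ∈ Finset.range (k (M.pa c)), M.I c i ω) + M.L c ω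
      with hYc
    have hcongr : ∀ ω ∈ {ω | Ykey ω = k}, f ω
        = (∏ v ∈ Jset, s (M.dep v) ^ k v)
            * (Set.indicator {ω | Ykey ω = k} (fun _ => (1:ℝ)) ω
                * ∏ c ∈ M.Lvl (j+1), s (j+1) ^ Yc c ω) := by
      intro ω hω
      have hωk : Ykey ω = k := hω
      have hNv : ∀ v ∈ Jset, M.N v ω = k v := by
        intro v hv
        simp only [hJset, Finset.mem_filter, Finset.mem_univ, true_and] at hv
        have := congrFun hωk v
        simpa only [hYkey, if_pos hv] using this
      rw [Set.indicator_of_mem hω, one_mul]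
      show ∏ v ∈ Finset.univ.filter (fun v => M.dep v ≤ j+1), s (M.dep v) ^ M.N v ω = _
      rw [hsplit, Finset.prod_union hdisjJL]
      congr 1
      · exact Finset.prod_congr rfl (fun v hv => by rw [hNv v hv])
      · apply Finset.prod_congr rfl
        intro c hc
        rw [hLv_dep c hc]
        congr 1
        rw [M.N_rec c (hLv_ne_root c hc) ω, hYc]
        rw [hNv (M.pa c) (hLv_pa c hc)]
    -- factorization by independence, by induction on the finset of level-(j+1) vertices
    have hfact : ∀ T : Finset V, ↑T ⊆ (M.Lvl (j+1) : Set V) →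
        ∫ ω, Set.indicator {ω | Ykey ω = k} (fun _ => (1:ℝ)) ω * ∏ c ∈ T, s (j+1) ^ Yc c ω
          = (ℙ {ω | Ykey ω = k}).toReal
              * ∏ c ∈ T, (u ^ (k (M.pa c)) * Real.exp β) := by
      intro T
      induction T using Finset.induction_on with
      | empty =>
        intro _
        simp only [Finset.prod_empty, mul_one]
        rw [integral_indicator (hAkamb k), setIntegral_const, smul_eq_mul, mul_one, measureReal_def]
      | insert c0 T' hc0 ih =>
        intro hT
        have hc0Lv : c0 ∈ M.Lvl (j+1) := hT (Finset.mem_insert_self c0 T')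
        have hT' : ↑T' ⊆ (M.Lvl (j+1) : Set V) :=
          fun x hx => hT (Finset.mem_insert_of_mem hx)
        -- σ-algebras
        set U : Set (V ⊕ V × ℕ) := M.blw j ∪ ⋃ c ∈ (↑T' : Set V), M.grp c with hU
        have hdisjU : Disjoint U (M.grp c0) := by
          rw [hU, Set.disjoint_union_left]
          constructor
          · exact (M.disjoint_blw_grp (by rw [hLv_dep c0 hc0Lv]; omega)).symm.symm
          · rw [Set.disjoint_iUnion_left]
            intro c
            rw [Set.disjoint_iUnion_left]
            intro hcT'
            exact M.disjoint_grp_grp (fun h => hc0 (h ▸ hcT'))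
        have hmg : Measurable[M.mS (M.grp c0)] (fun ω => s (j+1) ^ Yc c0 ω) :=
          measurable_pow_comp (M.measurable_Y c0 _) _
        have hmf1 : Measurable[M.mS U]
            (fun ω => Set.indicator {ω | Ykey ω = k} (fun _ => (1:ℝ)) ω
              * ∏ c ∈ T', s (j+1) ^ Yc c ω) := by
          apply Measurable.mul
          · apply Measurable.indicator (measurable_const)
            exact (M.mS_mono (Set.subset_union_left)) _ (hAk k)
          · apply Finset.measurable_prod
            intro c hcT'
            have hsub : M.grp c ⊆ U := by
              rw [hU]
              intro x hx
              apply Set.mem_union_right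
              exact Set.mem_biUnion hcT' hx
            exact (measurable_pow_comp (M.measurable_Y c _) _).mono (M.mS_mono hsub) le_rfl
        have hindep : IndepFun
            (fun ω => Set.indicator {ω | Ykey ω = k} (fun _ => (1:ℝ)) ω
              * ∏ c ∈ T', s (j+1) ^ Yc c ω)
            (fun ω => s (j+1) ^ Yc c0 ω) ℙ := M.indepFun_of_mS hdisjU hmf1 hmg
        have habs1 : ∀ ω, |Set.indicator {ω | Ykey ω = k} (fun _ => (1:ℝ)) ω
            * ∏ c ∈ T', s (j+1) ^ Yc c ω| ≤ 1 := by
          intro ω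
          rw [abs_mul]
          have h1 : |Set.indicator {ω | Ykey ω = k} (fun _ => (1:ℝ)) ω| ≤ 1 := by
            by_cases hω : ω ∈ {ω | Ykey ω = k}
            · rw [Set.indicator_of_mem hω]; simp
            · rw [Set.indicator_of_notMem hω]; simp
          have h2 : |∏ c ∈ T', s (j+1) ^ Yc c ω| ≤ 1 := by
            rw [Finset.abs_prod]
            exact Finset.prod_le_one (fun c _ => abs_nonneg _)
              (fun c _ => pow_nat_abs_le_one hsj1 _)
          calc |Set.indicator {ω | Ykey ω = k} (fun _ => (1:ℝ)) ω|
                * |∏ c ∈ T', s (j+1) ^ Yc c ω| ≤ 1 * 1 :=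
              mul_le_mul h1 h2 (abs_nonneg _) one_pos.le
            _ = 1 := by ring
        have hint1 : Integrable (fun ω => Set.indicator {ω | Ykey ω = k} (fun _ => (1:ℝ)) ω
            * ∏ c ∈ T', s (j+1) ^ Yc c ω) ℙ :=
          integrable_of_bounded (hmf1.mono (M.mS_le _) le_rfl) 1 habs1
        have hint2 : Integrable (fun ω => s (j+1) ^ Yc c0 ω) ℙ :=
          integrable_of_bounded
            ((hmg.mono (M.mS_le _) le_rfl)) 1 (fun ω => pow_nat_abs_le_one hsj1 _)
        calc ∫ ω, Set.indicator {ω | Ykey ω = k} (fun _ => (1:ℝ)) ω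
              * ∏ c ∈ insert c0 T', s (j+1) ^ Yc c ω
            = ∫ ω, (Set.indicator {ω | Ykey ω = k} (fun _ => (1:ℝ)) ω
                * ∏ c ∈ T', s (j+1) ^ Yc c ω) * (s (j+1) ^ Yc c0 ω) := by
              congr 1; funext ω; rw [Finset.prod_insert hc0]; ring
          _ = (∫ ω, Set.indicator {ω | Ykey ω = k} (fun _ => (1:ℝ)) ω
                * ∏ c ∈ T', s (j+1) ^ Yc c ω) * ∫ ω, s (j+1) ^ Yc c0 ω :=
              hindep.integral_fun_mul_eq_mul_integral hint1.1 hint2.1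
          _ = ((ℙ {ω | Ykey ω = k}).toReal * ∏ c ∈ T', (u ^ (k (M.pa c)) * Real.exp β))
                * (u ^ (k (M.pa c0)) * Real.exp β) := by
              rw [ih hT', M.pgf_group ha halpha (hLv_ne_root c0 hc0Lv) _ hsj1]
          _ = (ℙ {ω | Ykey ω = k}).toReal
                * ∏ c ∈ insert c0 T', (u ^ (k (M.pa c)) * Real.exp β) := by
              rw [Finset.prod_insert hc0]; ring
    -- put the pieces together for this fiber
    calc ∫ ω in {ω | Ykey ω = k}, f ω
        = ∫ ω in {ω | Ykey ω = k}, (∏ v ∈ Jset, s (M.dep v) ^ k v)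
            * (Set.indicator {ω | Ykey ω = k} (fun _ => (1:ℝ)) ω
                * ∏ c ∈ M.Lvl (j+1), s (j+1) ^ Yc c ω) := by
          apply setIntegral_congr_fun (hAkamb k)
          intro ω hω
          exact hcongr ω hω
      _ = (∏ v ∈ Jset, s (M.dep v) ^ k v) * ∫ ω in {ω | Ykey ω = k},
            (Set.indicator {ω | Ykey ω = k} (fun _ => (1:ℝ)) ω
                * ∏ c ∈ M.Lvl (j+1), s (j+1) ^ Yc c ω) := by
          rw [integral_const_mul]
      _ = (∏ v ∈ Jset, s (M.dep v) ^ k v) * ∫ ω,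
            (Set.indicator {ω | Ykey ω = k} (fun _ => (1:ℝ)) ω
                * ∏ c ∈ M.Lvl (j+1), s (j+1) ^ Yc c ω) := by
          congr 1
          rw [← integral_indicator (hAkamb k)]
          congr 1
          funext ω
          by_cases hω : ω ∈ {ω | Ykey ω = k}
          · rw [Set.indicator_of_mem hω]
          · rw [Set.indicator_of_notMem hω, Set.indicator_of_notMem hω, zero_mul]
      _ = (∏ v ∈ Jset, s (M.dep v) ^ k v) * ((ℙ {ω | Ykey ω = k}).toReal
            * ∏ c ∈ M.Lvl (j+1), (u ^ (k (M.pa c)) * Real.exp β)) := by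
          rw [hfact (M.Lvl (j+1)) (by exact fun x hx => hx)]
      _ = ((ℙ {ω | Ykey ω = k}).toReal * ∏ v ∈ Jset, s (M.dep v) ^ k v)
            * ∏ c ∈ M.Lvl (j+1), (u ^ (k (M.pa c)) * Real.exp β) := by ring
  -- grouping the children factors by their parent
  have hchild_card : ∀ v ∈ M.Lvl j, ((M.Lvl (j+1)).filter (fun c => M.pa c = v)).card = χ := by
    intro v hv
    simp only [Lvl, Finset.mem_filter, Finset.mem_univ, true_and] at hv
    rw [M.children_eq hv]
    have hv' : G.dist M.root v = j := hv
    exact hchildren v (by omega)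
  have hgrp : ∀ k : V → ℕ,
      ∏ c ∈ M.Lvl (j+1), u ^ (k (M.pa c)) = ∏ v ∈ M.Lvl j, (u ^ χ) ^ k v := by
    intro k
    rw [← Finset.prod_fiberwise_of_maps_to (fun c hc => (M.mem_Lvl_succ hc).2)
      (fun c => u ^ k (M.pa c))]
    apply Finset.prod_congr rfl
    intro v hv
    have hinner : ∀ c ∈ (M.Lvl (j+1)).filter (fun c => M.pa c = v),
        u ^ k (M.pa c) = u ^ k v := by
      intro c hc
      rw [(Finset.mem_filter.mp hc).2]
    rw [Finset.prod_congr rfl hinner, Finset.prod_const, hchild_card v hv,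
      ← pow_mul, ← pow_mul, Nat.mul_comm]
  -- merging the extra factor into the level-j factors
  have hLsub : M.Lvl j ⊆ Jset := by
    intro v hv
    simp only [Lvl, Finset.mem_filter, Finset.mem_univ, true_and] at hv
    simp only [hJset, Finset.mem_filter, Finset.mem_univ, true_and]
    omega
  have hJprod : ∀ k : V → ℕ,
      (∏ v ∈ Jset, s (M.dep v) ^ k v) * ∏ v ∈ M.Lvl j, (u ^ χ) ^ k v
        = ∏ v ∈ Jset, s' (M.dep v) ^ k v := by
    intro k
    rw [← Finset.prod_sdiff hLsub, ← Finset.prod_sdiff (f := fun v => s' (M.dep v) ^ k v) hLsub]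
    have h1 : ∏ v ∈ Jset \ M.Lvl j, s' (M.dep v) ^ k v
        = ∏ v ∈ Jset \ M.Lvl j, s (M.dep v) ^ k v := by
      apply Finset.prod_congr rfl
      intro v hv
      rw [Finset.mem_sdiff] at hv
      have hle : M.dep v ≤ j := by
        have := hv.1
        simp only [hJset, Finset.mem_filter, Finset.mem_univ, true_and] at this
        exact this
      have hnj : M.dep v ≠ j := by
        intro h
        exact hv.2 (by simp only [Lvl, Finset.mem_filter, Finset.mem_univ, true_and]; exact h)
      rw [hs' _ (by omega)]
    have h2 : ∀ v ∈ M.Lvl j, s' (M.dep v) ^ k v = s (M.dep v) ^ k v * (u ^ χ) ^ k v := by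
      intro v hv
      simp only [Lvl, Finset.mem_filter, Finset.mem_univ, true_and] at hv
      rw [hv, hs'j, mul_pow]
    rw [h1, Finset.prod_congr rfl h2, Finset.prod_mul_distrib]
    ring
  -- the tsum decompositions
  have hsum : ∫ ω, f ω = ∑' k : V → ℕ, ∫ ω in {ω | Ykey ω = k}, f ω :=
    integral_eq_tsum_fibers (Y := Ykey) hAkamb hfint
  have hcard : (M.Lvl (j+1)).card = χ ^ (j+1) := M.card_Lvl hchildren (j+1) hj
  have hterm : ∀ k : V → ℕ, ∫ ω in {ω | Ykey ω = k}, f ω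
      = Real.exp ((χ:ℝ)^(j+1) * β)
          * ((ℙ {ω | Ykey ω = k}).toReal * ∏ v ∈ Jset, s' (M.dep v) ^ k v) := by
    intro k
    rw [key k, Finset.prod_mul_distrib, hgrp k, Finset.prod_const, hcard]
    have hexp : (Real.exp β) ^ (χ ^ (j+1)) = Real.exp ((χ:ℝ)^(j+1) * β) := by
      rw [← Real.exp_nat_mul]
      push_cast
      ring_nf
    rw [hexp, ← hJprod k]
    ring
  have hterm' : ∀ k : V → ℕ, ∫ ω in {ω | Ykey ω = k}, f' ω
      = (ℙ {ω | Ykey ω = k}).toReal * ∏ v ∈ Jset, s' (M.dep v) ^ k v := by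
    intro k
    have : ∫ ω in {ω | Ykey ω = k}, f' ω
        = ∫ _ω in {ω | Ykey ω = k}, ∏ v ∈ Jset, s' (M.dep v) ^ k v := by
      apply setIntegral_congr_fun (hAkamb k)
      intro ω hω
      have hωk : Ykey ω = k := hω
      apply Finset.prod_congr rfl
      intro v hv
      simp only [hJset, Finset.mem_filter, Finset.mem_univ, true_and] at hv
      have := congrFun hωk v
      simp only [hYkey, if_pos hv] at this
      rw [this]
    rw [this, setIntegral_const, smul_eq_mul, measureReal_def]
  have hsum' : ∫ ω, f' ω
      = ∑' k : V → ℕ, (ℙ {ω | Ykey ω = k}).toReal * ∏ v ∈ Jset, s' (M.dep v) ^ k v := by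
    rw [integral_eq_tsum_fibers (Y := Ykey) hAkamb hf'int]
    exact tsum_congr hterm'
  show ∫ ω, f ω = Real.exp ((χ:ℝ)^(j+1) * β) * ∫ ω, f' ω
  rw [hsum, tsum_congr hterm, tsum_mul_left, hsum']

end MPMRF

/-- Pgf of the sum on a `χ`-nary tree of radius `ξ` (every vertex at
distance `< ξ` from the root has exactly `χ` children, every vertex at distance `ξ` is
a leaf) with common dependence parameter `a ∈ [0,1]` on every edge: with
`n = Σ_{i=0}^{ξ} χ^i` the number of vertices,
`E[t^M] = exp(λ(a + (1−a)n)(Σ_{i=0}^{ξ} (χ^{ξ−i}(1−a)^{min(1,ξ−i)}/(a+(1−a)n)) g_i(t) − 1))`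
for `t ∈ [−1,1]`. -/
theorem mpmrf_chi_nary_sum_pgf {V : Type} [Fintype V] [DecidableEq V]
    (G : SimpleGraph V) (lam a : ℝ) (alpha : Sym2 V → ℝ)
    (Ω : Type) [MeasureSpace Ω] [IsProbabilityMeasure (ℙ : Measure Ω)]
    (M : MPMRF G lam alpha Ω)
    (χ ξ : ℕ) (hχ : 1 ≤ χ) (hξ : 1 ≤ ξ)
    (ha : a ∈ Set.Icc (0 : ℝ) 1)
    (halpha : ∀ e ∈ G.edgeSet, alpha e = a)
    (hdepth : ∀ v : V, G.dist M.root v ≤ ξ)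
    (hchildren : ∀ v : V, G.dist M.root v < ξ →
      (Finset.univ.filter (fun j => j ≠ M.root ∧ M.pa j = v)).card = χ)
    (hleaves : ∀ v : V, G.dist M.root v = ξ →
      (Finset.univ.filter (fun j => j ≠ M.root ∧ M.pa j = v)).card = 0) :
    ∀ t ∈ Set.Icc (-1 : ℝ) 1,
      ∫ ω, (t : ℝ) ^ (∑ v : V, M.N v ω) ∂ℙ
        = Real.exp (lam * (a + (1 - a) * (∑ i ∈ Finset.range (ξ + 1), (χ : ℝ) ^ i))
            * ((∑ i ∈ Finset.range (ξ + 1),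
                  ((χ : ℝ) ^ (ξ - i) * (1 - a) ^ (min 1 (ξ - i))
                      / (a + (1 - a) * (∑ i ∈ Finset.range (ξ + 1), (χ : ℝ) ^ i)))
                    * gwSum a χ i t) - 1)) := by

  intro t ht
  have habs_t : |t| ≤ 1 := abs_le.mpr ⟨ht.1, ht.2⟩
  set σfun : ℕ → ℕ → ℝ := fun m d => if d = ξ - m then gwSum a χ m t else t with hσ
  have hσabs : ∀ m d, |σfun m d| ≤ 1 := by
    intro m d
    rw [hσ]
    dsimp only
    split
    · exact gwSum_abs_le ha.1 ha.2 habs_t m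
    · exact habs_t
  -- the main induction: peel levels one by one
  have hQ : ∀ m, m ≤ ξ →
      ∫ ω, t ^ (∑ v : V, M.N v ω)
        = (∏ i ∈ Finset.range m,
            Real.exp ((χ:ℝ)^(ξ-i) * (lam*(1-a)*(gwSum a χ i t - 1))))
          * ∫ ω, ∏ v ∈ Finset.univ.filter (fun v => M.dep v ≤ ξ - m),
              σfun m (M.dep v) ^ M.N v ω := by
    intro m
    induction m with
    | zero =>
      intro _
      rw [Finset.range_zero, Finset.prod_empty, one_mul]
      congr 1
      funext ω
      have huniv : Finset.univ.filter (fun v => M.dep v ≤ ξ - 0) = Finset.univ := by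
        apply Finset.filter_true_of_mem
        intro v _
        have : G.dist M.root v ≤ ξ := hdepth v
        have hd : M.dep v = G.dist M.root v := rfl
        omega
      rw [huniv, ← Finset.prod_pow_eq_pow_sum]
      apply Finset.prod_congr rfl
      intro v _
      congr 1
      rw [hσ]
      dsimp only
      split
      · rfl
      · rfl
    | succ m ih =>
      intro hm1
      rw [ih (by omega)]
      have hj1 : ξ - m - 1 + 1 = ξ - m := by omega
      have hj2 : ξ - m - 1 = ξ - (m + 1) := by omega
      have hs'cond : ∀ d, d < ξ - m - 1 → σfun (m+1) d = σfun m d := by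
        intro d hd
        rw [hσ]
        dsimp only
        rw [if_neg (by omega), if_neg (by omega)]
      have hs'j : σfun (m+1) (ξ - m - 1)
          = σfun m (ξ - m - 1) * (1 - a + a * σfun m (ξ - m - 1 + 1)) ^ χ := by
        rw [hσ]
        dsimp only
        rw [if_pos (by omega), if_neg (by omega), hj1, if_pos rfl]
        have : gwSum a χ (m+1) t = t * (1 - a + a * gwSum a χ m t) ^ χ := rfl
        rw [this]
      have hpeel := M.peel ha halpha hchildren (j := ξ - m - 1) (by omega)
        (σfun m) (σfun (m+1)) (hσabs m) (hσabs (m+1)) hs'cond hs'j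
      rw [hj1] at hpeel
      have hσval : σfun m (ξ - m) = gwSum a χ m t := by
        rw [hσ]; dsimp only; rw [if_pos rfl]
      rw [hσval] at hpeel
      rw [hj2] at hpeel
      rw [hpeel, Finset.prod_range_succ]
      ring
  have hfinal0 := hQ ξ le_rfl
  -- evaluate the last remaining integral (the root)
  have hroot : Finset.univ.filter (fun v => M.dep v ≤ ξ - ξ) = {M.root} := by
    ext v
    simp only [Finset.mem_filter, Finset.mem_univ, true_and, Finset.mem_singleton]
    rw [Nat.sub_self, Nat.le_zero]
    exact M.dep_eq_zero_iff
  have hdroot : M.dep M.root = 0 := M.dep_eq_zero_iff.mpr rfl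
  have hQξ : ∫ ω, ∏ v ∈ Finset.univ.filter (fun v => M.dep v ≤ ξ - ξ),
      σfun ξ (M.dep v) ^ M.N v ω = Real.exp (lam * (gwSum a χ ξ t - 1)) := by
    have heq : (fun ω => ∏ v ∈ Finset.univ.filter (fun v => M.dep v ≤ ξ - ξ),
        σfun ξ (M.dep v) ^ M.N v ω) = fun ω => (gwSum a χ ξ t) ^ M.L M.root ω := by
      funext ω
      rw [hroot, Finset.prod_singleton, hdroot, M.N_root]
      congr 1
      rw [hσ]; dsimp only; rw [if_pos (by omega)]
    rw [heq]
    exact pgf_of_poisson (M.meas_L M.root) M.lam_pos.le M.L_root_poisson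
      (gwSum_abs_le ha.1 ha.2 habs_t ξ)
  rw [hQξ] at hfinal0
  rw [hfinal0]
  -- final algebra
  rw [← Real.exp_sum, ← Real.exp_add]
  congr 1
  set nR : ℝ := ∑ i ∈ Finset.range (ξ + 1), (χ : ℝ) ^ i with hnR
  set A : ℝ := ∑ i ∈ Finset.range ξ, (χ:ℝ)^(ξ-i) * gwSum a χ i t with hA
  have hnR1 : (1:ℝ) ≤ nR := by
    rw [hnR]
    calc (1:ℝ) = (χ:ℝ)^0 := by rw [pow_zero]
      _ ≤ ∑ i ∈ Finset.range (ξ + 1), (χ : ℝ) ^ i :=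
        Finset.single_le_sum (f := fun i => (χ:ℝ)^i) (fun i _ => by positivity)
          (Finset.mem_range.mpr (by omega))
  have hD : (0:ℝ) < a + (1 - a) * nR := by nlinarith [ha.1, ha.2]
  -- LHS sum
  have hB : ∑ i ∈ Finset.range ξ, (χ:ℝ)^(ξ-i) = nR - 1 := by
    have h1 : ∑ i ∈ Finset.range ξ, (χ:ℝ)^(ξ-i) = ∑ i ∈ Finset.range ξ, (χ:ℝ)^(i+1) := by
      rw [← Finset.sum_range_reflect (fun i => (χ:ℝ)^(i+1)) ξ]
      apply Finset.sum_congr rfl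
      intro i hi
      rw [Finset.mem_range] at hi
      congr 1
      omega
    have h2 : nR = (∑ i ∈ Finset.range ξ, (χ:ℝ)^(i+1)) + 1 := by
      rw [hnR, Finset.sum_range_succ' (fun i => (χ:ℝ)^i) ξ, pow_zero]
    rw [h1, h2]
    ring
  have hLsum : ∑ i ∈ Finset.range ξ, (χ:ℝ)^(ξ-i) * (lam*(1-a)*(gwSum a χ i t - 1))
      = lam*(1-a)*A - lam*(1-a)*(nR - 1) := by
    have : ∀ i ∈ Finset.range ξ, (χ:ℝ)^(ξ-i) * (lam*(1-a)*(gwSum a χ i t - 1))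
        = lam*(1-a) * ((χ:ℝ)^(ξ-i) * gwSum a χ i t) - lam*(1-a) * (χ:ℝ)^(ξ-i) := by
      intro i _
      ring
    rw [Finset.sum_congr rfl this, Finset.sum_sub_distrib, ← Finset.mul_sum, ← Finset.mul_sum,
      hB, hA]
  -- RHS sum
  have hRsum : ∑ i ∈ Finset.range (ξ + 1),
      ((χ : ℝ) ^ (ξ - i) * (1 - a) ^ (min 1 (ξ - i)) / (a + (1 - a) * nR)) * gwSum a χ i t
      = (1-a)/(a + (1-a)*nR) * A + 1/(a + (1-a)*nR) * gwSum a χ ξ t := by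
    rw [Finset.sum_range_succ]
    congr 1
    · have : ∀ i ∈ Finset.range ξ,
          ((χ : ℝ) ^ (ξ - i) * (1 - a) ^ (min 1 (ξ - i)) / (a + (1 - a) * nR)) * gwSum a χ i t
            = (1-a)/(a + (1-a)*nR) * ((χ:ℝ)^(ξ-i) * gwSum a χ i t) := by
        intro i hi
        rw [Finset.mem_range] at hi
        have hmin : min 1 (ξ - i) = 1 := by omega
        rw [hmin, pow_one]
        ring
      rw [Finset.sum_congr rfl this, ← Finset.mul_sum, hA]
    · have hmin : min 1 (ξ - ξ) = 0 := by omega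
      rw [hmin, Nat.sub_self, pow_zero, pow_zero]
      ring
  rw [hLsum, hRsum]
  field_simp
  ring
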